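/- For a segment s(u) in a drawing whose corresponding vertex u of the intersection graph has degree δ_u, there are exactly δ_u + 1 relevant symmetric stub pairs for s(u): the δ_u stub lengths ℓ_1(u) < ... < ℓ_{δ_u}(u) determined by the crossing points (each ℓ_i(u) being the largest symmetric stub avoiding the i-th closest crossing), together with the whole segment ℓ_0(u); any maximum-ink symmetric partial edge drawing can be assumed to use only these stub lengths. -/
import Mathlib


open scoped Classical

/-- For a segment s(u) whose vertex u of the intersection graph has degree
δ_u, there are exactly δ_u + 1 relevant symmetric stub pairs: the δ_u stub lengths
induced by the crossing points (the largest symmetric stub avoiding a given crossing),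
together with the whole segment; any maximum-ink SPED can be assumed to use only these
stub lengths.

Model: `V` is the set of segments, `len u` the length of segment `u`, `cross` the crossing
relation, and `md u v` the distance from the crossing point of `u` and `v` to the nearer
endpoint of `u` (so a symmetric stub pair of per-side length `t` on `u` covers that
crossing point iff `md u v < t`).  A SPED assigns to each segment a per-side stub length
`t u` with `0 < t u ≤ len u / 2` (the value `len u / 2` is the whole segment) such that
for no crossing pair both segments cover the crossing point.  The candidate set of `u` is
`Cand u = {md u v | v crosses u} ∪ {len u / 2}`, of cardinality exactly `δ u + 1` when the
crossing distances are pairwise distinct; and every SPED can be transformed into one of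
at least as much ink using only candidate stub lengths. -/
theorem stmt_1 {V : Type*} [Fintype V] [DecidableEq V]
    (len : V → ℝ) (cross : V → V → Prop) [DecidableRel cross]
    (md : V → V → ℝ)
    (cross_symm : ∀ u v, cross u v → cross v u)
    (cross_irrefl : ∀ u, ¬ cross u u)
    (hlen : ∀ u, 0 < len u)
    (hmd : ∀ u v, cross u v → 0 < md u v ∧ md u v ≤ len u / 2)
    -- the degree of u in the intersection graph
    (δ : V → ℕ) (hδ : ∀ u, δ u = (Finset.univ.filter fun v => cross u v).card)
    (Cand : V → Finset ℝ)
    (hCand : ∀ u, Cand u =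
      insert (len u / 2) ((Finset.univ.filter fun v => cross u v).image (md u)))
    -- validity and ink of a SPED
    (valid : (V → ℝ) → Prop)
    (hvalid : ∀ t, valid t ↔
      ((∀ u, 0 < t u ∧ t u ≤ len u / 2) ∧
        ∀ u v, cross u v → ¬ (md u v < t u ∧ md v u < t v)))
    (ink : (V → ℝ) → ℝ) (hink : ∀ t, ink t = ∑ u, 2 * t u) :
    (∀ u, (Cand u).card ≤ δ u + 1) ∧
    (∀ u, Set.InjOn (md u) {v | cross u v} →
        (∀ v, cross u v → md u v ≠ len u / 2) → (Cand u).card = δ u + 1) ∧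
    -- any SPED can be replaced by one with at least as much ink using only these lengths
    (∀ t, valid t → ∃ t', valid t' ∧ ink t ≤ ink t' ∧ ∀ u, t' u ∈ Cand u) := by
  refine ⟨?_, ?_, ?_⟩
  · intro u
    rw [hCand u, hδ u]
    calc (insert (len u / 2)
          ((Finset.univ.filter fun v => cross u v).image (md u))).card
        ≤ ((Finset.univ.filter fun v => cross u v).image (md u)).card + 1 :=
          Finset.card_insert_le _ _
      _ ≤ (Finset.univ.filter fun v => cross u v).card + 1 := by
          exact Nat.add_le_add_right (Finset.card_image_le) 1
  · intro u hinj hne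
    rw [hCand u, hδ u]
    have hnotmem : len u / 2 ∉ (Finset.univ.filter fun v => cross u v).image (md u) := by
      intro h
      obtain ⟨v, hv, hmdv⟩ := Finset.mem_image.mp h
      exact hne v (Finset.mem_filter.mp hv).2 hmdv
    rw [Finset.card_insert_of_notMem hnotmem]
    congr 1
    apply Finset.card_image_of_injOn
    intro a ha b hb hab
    exact hinj (Finset.mem_filter.mp ha).2 (Finset.mem_filter.mp hb).2 hab
  · intro t ht
    rw [hvalid] at ht
    obtain ⟨hpos, hcr⟩ := ht
    have hne : ∀ u, ((Cand u).filter fun c => t u ≤ c).Nonempty := by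
      intro u
      refine ⟨len u / 2, Finset.mem_filter.mpr ⟨?_, (hpos u).2⟩⟩
      rw [hCand u]; exact Finset.mem_insert_self _ _
    set t' : V → ℝ := fun u => ((Cand u).filter fun c => t u ≤ c).min' (hne u) with ht'
    have hmem : ∀ u, t' u ∈ (Cand u).filter fun c => t u ≤ c := fun u =>
      Finset.min'_mem _ (hne u)
    have hCandmem : ∀ u, t' u ∈ Cand u := fun u => (Finset.mem_filter.mp (hmem u)).1
    have hle : ∀ u, t u ≤ t' u := fun u => (Finset.mem_filter.mp (hmem u)).2
    have hmin : ∀ u c, c ∈ Cand u → t u ≤ c → t' u ≤ c := fun u c hc htc =>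
      Finset.min'_le _ c (Finset.mem_filter.mpr ⟨hc, htc⟩)
    have hub : ∀ u, t' u ≤ len u / 2 := by
      intro u
      have := hCandmem u
      rw [hCand u] at this
      rcases Finset.mem_insert.mp this with h | h
      · exact le_of_eq h
      · obtain ⟨v, hv, hmdv⟩ := Finset.mem_image.mp h
        rw [← hmdv]
        exact (hmd u v (Finset.mem_filter.mp hv).2).2
    refine ⟨t', ?_, ?_, hCandmem⟩
    · rw [hvalid]
      refine ⟨fun u => ⟨lt_of_lt_of_le (hpos u).1 (hle u), hub u⟩, ?_⟩
      intro u v huv ⟨h1, h2⟩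
      apply hcr u v huv
      constructor
      · by_contra h
        push_neg at h
        have : md u v ∈ Cand u := by
          rw [hCand u]
          exact Finset.mem_insert_of_mem (Finset.mem_image_of_mem _
            (Finset.mem_filter.mpr ⟨Finset.mem_univ v, huv⟩))
        exact absurd (hmin u _ this h) (not_le.mpr h1)
      · by_contra h
        push_neg at h
        have : md v u ∈ Cand v := by
          rw [hCand v]
          exact Finset.mem_insert_of_mem (Finset.mem_image_of_mem _
            (Finset.mem_filter.mpr ⟨Finset.mem_univ u, cross_symm u v huv⟩))
        exact absurd (hmin v _ this h) (not_le.mpr h2)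
    · rw [hink, hink]
      exact Finset.sum_le_sum fun u _ => by linarith [hle u]
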